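/- Let n be a positive integer and let 𝓕 be a family of subsets of [n] = {1,2,...,n} that contains no sunflower with 3 petals. Then |𝓕| ≤ 3n·∑_{i=0}^{⌊n/3⌋} C(n, i), where C(n, i) denotes the binomial coefficient 'n choose i'. -/

import Mathlib

/-- `{F₁, F₂, F₃}` is a sunflower with 3 petals: the three sets are pairwise
distinct and any pairwise intersection equals the common intersection. -/
def IsSunflower3 {α : Type*} [DecidableEq α] (F₁ F₂ F₃ : Finset α) : Prop :=
  F₁ ≠ F₂ ∧ F₁ ≠ F₃ ∧ F₂ ≠ F₃ ∧
  F₁ ∩ F₂ = F₁ ∩ F₂ ∩ F₃ ∧ F₁ ∩ F₃ = F₁ ∩ F₂ ∩ F₃ ∧ F₂ ∩ F₃ = F₁ ∩ F₂ ∩ F₃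

/-- A family is sunflower-free if no three of its members form a sunflower
with 3 petals. -/
def SunflowerFree {α : Type*} [DecidableEq α] (𝓕 : Finset (Finset α)) : Prop :=
  ∀ F₁ ∈ 𝓕, ∀ F₂ ∈ 𝓕, ∀ F₃ ∈ 𝓕, ¬ IsSunflower3 F₁ F₂ F₃

open Finset Module

lemma exists_big_support {ι : Type*} [Fintype ι] [DecidableEq ι]
    (W : Submodule ℚ (ι → ℚ)) :
    ∃ h ∈ W, finrank ℚ W ≤ #(Finset.univ.filter (fun a => h a ≠ 0)) := by
  classical
  set S : Set ℕ := {k | ∃ h ∈ W, #(Finset.univ.filter (fun a => h a ≠ 0)) = k} with hS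
  have hne : S.Nonempty := ⟨_, 0, W.zero_mem, rfl⟩
  have hbdd : BddAbove S := by
    refine ⟨Fintype.card ι, ?_⟩
    rintro k ⟨h, _, rfl⟩
    exact le_trans (Finset.card_filter_le _ _) (by simp)
  obtain ⟨h, hhW, hcard⟩ := Nat.sSup_mem hne hbdd
  refine ⟨h, hhW, ?_⟩
  set σ := Finset.univ.filter (fun a => h a ≠ 0) with hσ
  have key : ∀ w ∈ W, (∀ a ∈ σ, w a = 0) → w = 0 := by
    intro w hwW hw0
    by_contra hw
    obtain ⟨b, hb⟩ : ∃ b, w b ≠ 0 := by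
      by_contra hall; push_neg at hall; exact hw (funext hall)
    have hbσ : b ∉ σ := fun hbs => hb (hw0 b hbs)
    have hhb : h b = 0 := by
      by_contra hhb; exact hbσ (by simp [hσ, hhb])
    have hsub : insert b σ ⊆ Finset.univ.filter (fun a => (h + w) a ≠ 0) := by
      intro a ha
      rcases Finset.mem_insert.1 ha with rfl | haσ
      · simp [hhb, hb]
      · have h1 : h a ≠ 0 := by simpa [hσ] using haσ
        simp [hw0 a haσ, h1]
    have hle : #σ + 1 ≤ #(Finset.univ.filter (fun a => (h + w) a ≠ 0)) := by
      have := Finset.card_le_card hsub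
      rwa [Finset.card_insert_of_notMem hbσ] at this
    have hle2 : #(Finset.univ.filter (fun a => (h + w) a ≠ 0)) ≤ sSup S :=
      le_csSup hbdd ⟨h + w, W.add_mem hhW hwW, rfl⟩
    omega
  -- restriction map is injective
  let ρ : W →ₗ[ℚ] (↥σ → ℚ) := (LinearMap.funLeft ℚ ℚ (Subtype.val)).comp W.subtype
  have hinj : Function.Injective ρ := by
    rw [← LinearMap.ker_eq_bot, LinearMap.ker_eq_bot']
    intro w hw0
    have : (w : ι → ℚ) = 0 := by
      refine key w w.2 (fun a ha => ?_)
      have := congrFun hw0 ⟨a, ha⟩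
      simpa [ρ] using this
    exact Subtype.ext this
  have := LinearMap.finrank_le_finrank_of_injective hinj
  rwa [Module.finrank_fintype_fun_eq_card, Fintype.card_coe] at this


-- if x,y,z in a sunflower-free equal-size family are not all equal, some i is in exactly two
lemma exists_two {α : Type*} [DecidableEq α] {x y z : Finset α}
    (hcard : #x = #y) (hcard2 : #x = #z)
    (hnsf : ¬ IsSunflower3 x y z) (hne : ¬ (x = y ∧ x = z)) :
    ∃ i, ((i ∈ x ∧ i ∈ y ∧ i ∉ z) ∨ (i ∈ x ∧ i ∉ y ∧ i ∈ z) ∨ (i ∉ x ∧ i ∈ y ∧ i ∈ z)) := by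
  have sd : ∀ {a b : Finset α}, #a = #b → a ≠ b → ∃ i, i ∈ a ∧ i ∉ b := by
    intro a b hc hne
    by_contra hc2; push_neg at hc2
    exact hne (Finset.eq_of_subset_of_card_le hc2 hc.ge)
  by_cases hxy : x = y
  · -- then x ≠ z
    have hxz : x ≠ z := fun h => hne ⟨hxy, h⟩
    obtain ⟨i, hia, hib⟩ := sd hcard2 hxz
    exact ⟨i, Or.inl ⟨hia, hxy ▸ hia, hib⟩⟩
  by_cases hxz : x = z
  · obtain ⟨i, hia, hib⟩ := sd hcard hxy
    exact ⟨i, Or.inr (Or.inl ⟨hia, hib, hxz ▸ hia⟩)⟩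
  by_cases hyz : y = z
  · obtain ⟨i, hia, hib⟩ := sd hcard.symm (fun h => hxy h.symm)
    exact ⟨i, Or.inr (Or.inr ⟨hib, hia, hyz ▸ hia⟩)⟩
  -- all distinct: not a sunflower
  unfold IsSunflower3 at hnsf
  push_neg at hnsf
  have h3 := hnsf hxy hxz hyz
  have key : ∀ {a b : Finset α}, a ∩ b ≠ x ∩ y ∩ z → x ∩ y ∩ z ⊆ a ∩ b →
      ∃ i, i ∈ a ∧ i ∈ b ∧ ¬(i ∈ x ∧ i ∈ y ∧ i ∈ z) := by
    intro a b hne hsub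
    have : ¬ (a ∩ b ⊆ x ∩ y ∩ z) := fun hc => hne (Finset.Subset.antisymm hc hsub)
    obtain ⟨i, hi1, hi2⟩ := Finset.not_subset.1 this
    refine ⟨i, (Finset.mem_inter.1 hi1).1, (Finset.mem_inter.1 hi1).2, fun hc => hi2 ?_⟩
    simp [Finset.mem_inter, hc.1, hc.2.1, hc.2.2]
  by_cases h1 : x ∩ y = x ∩ y ∩ z
  · by_cases h2 : x ∩ z = x ∩ y ∩ z
    · have h3' := h3 h1 h2
      obtain ⟨i, hiy, hiz, hno⟩ := key h3' (Finset.inter_subset_inter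
        (Finset.inter_subset_right) (Finset.Subset.refl z))
      exact ⟨i, Or.inr (Or.inr ⟨fun hx => hno ⟨hx, hiy, hiz⟩, hiy, hiz⟩)⟩
    · obtain ⟨i, hix, hiz, hno⟩ := key h2 (by
        intro i hi; simp only [Finset.mem_inter] at hi ⊢; exact ⟨hi.1.1, hi.2⟩)
      exact ⟨i, Or.inr (Or.inl ⟨hix, fun hy => hno ⟨hix, hy, hiz⟩, hiz⟩)⟩
  · obtain ⟨i, hix, hiy, hno⟩ := key h1 (Finset.inter_subset_left)
    exact ⟨i, Or.inl ⟨hix, hiy, fun hz => hno ⟨hix, hiy, hz⟩⟩⟩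


variable {n : ℕ}

private def ind (i : Fin n) (x : Finset (Fin n)) : ℚ := if i ∈ x then 1 else 0
private def eS (S x : Finset (Fin n)) : ℚ := if S ⊆ x then 1 else 0
private def q3 (s : Finset (Fin n)) (z : Finset (Fin n)) : ℚ := ∏ i ∈ s, (ind i z - 2)
private def q2 (s : Finset (Fin n)) (y z : Finset (Fin n)) : ℚ :=
  ∏ i ∈ s, (ind i y + ind i z - 2)

lemma prod_ind (S x : Finset (Fin n)) : (∏ i ∈ S, ind i x) = eS S x := by
  unfold ind eS
  by_cases h : S ⊆ x
  · rw [if_pos h, Finset.prod_eq_one]; intro i hi; rw [if_pos (h hi)]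
  · rw [if_neg h]
    obtain ⟨i, hiS, hix⟩ : ∃ i ∈ S, i ∉ x := by
      by_contra hc; push_neg at hc; exact h hc
    exact Finset.prod_eq_zero hiS (by rw [if_neg hix])

lemma q2_expand (s : Finset (Fin n)) (y z : Finset (Fin n)) :
    q2 s y z = ∑ T ∈ s.powerset, eS T y * q3 (s \ T) z := by
  have : q2 s y z = ∏ i ∈ s, (ind i y + (ind i z - 2)) := by
    unfold q2; apply Finset.prod_congr rfl; intros; ring
  rw [this, Finset.prod_add]
  exact Finset.sum_congr rfl fun T _ => by rw [prod_ind]; rfl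

lemma q3_expand (s : Finset (Fin n)) (z : Finset (Fin n)) :
    q3 s z = ∑ U ∈ s.powerset, eS U z * (-2) ^ #(s \ U) := by
  have : q3 s z = ∏ i ∈ s, (ind i z + (-2)) := by
    unfold q3; apply Finset.prod_congr rfl; intros; ring
  rw [this, Finset.prod_add]
  refine Finset.sum_congr rfl fun U _ => by rw [prod_ind, Finset.prod_const]

private def Dset (n : ℕ) : Finset (Finset (Fin n)) :=
  Finset.univ.filter (fun S => #S ≤ n / 3)

private def P2 (n : ℕ) : Finset (Finset (Fin n)) :=
  (Finset.univ : Finset (Fin n)).powerset.filter (fun S => ¬ #S ≤ n / 3)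

private def Gfun (c : Finset (Fin n) → ℚ) (T z : Finset (Fin n)) : ℚ :=
  ∑ S ∈ P2 n, c S * (if T ⊆ Finset.univ \ S then q3 ((Finset.univ \ S) \ T) z else 0)

private def βfun (c : Finset (Fin n) → ℚ) (a U : Finset (Fin n)) : ℚ :=
  ∑ S ∈ P2 n, ∑ T ∈ ((Finset.univ \ S).powerset.filter (fun T => ¬ #T ≤ n / 3)),
    c S * eS T a *
      (if U ⊆ (Finset.univ \ S) \ T then ((-2:ℚ)) ^ #(((Finset.univ \ S) \ T) \ U) else 0)

lemma slice_decomp (c : Finset (Fin n) → ℚ) (a z : Finset (Fin n))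
    (hc : ∀ S ∈ Dset n, c S = 0) :
    (∑ S ∈ (Finset.univ : Finset (Fin n)).powerset, c S * q2 (Finset.univ \ S) a z)
    = ∑ T ∈ Dset n, eS T a * Gfun c T z + ∑ U ∈ Dset n, βfun c a U * eS U z := by
  classical
  -- Step 1: kill the small-S part
  have h1 : (∑ S ∈ (Finset.univ : Finset (Fin n)).powerset, c S * q2 (Finset.univ \ S) a z)
      = ∑ S ∈ P2 n, c S * q2 (Finset.univ \ S) a z := by
    rw [← Finset.sum_filter_add_sum_filter_not _ (fun S => #S ≤ n / 3)]
    have : (Finset.univ : Finset (Fin n)).powerset.filter (fun S => #S ≤ n / 3) = Dset n := by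
      ext S; simp [Dset]
    rw [this, Finset.sum_eq_zero (fun S hS => by rw [hc S hS, zero_mul]), zero_add]
    rfl
  rw [h1]
  -- Step 2: expand q2 and split T
  have h2 : ∀ S ∈ P2 n, c S * q2 (Finset.univ \ S) a z
      = (∑ T ∈ (Finset.univ \ S).powerset.filter (fun T => #T ≤ n / 3),
          c S * (eS T a * q3 ((Finset.univ \ S) \ T) z))
        + ∑ T ∈ (Finset.univ \ S).powerset.filter (fun T => ¬ #T ≤ n / 3),
          c S * (eS T a * q3 ((Finset.univ \ S) \ T) z) := by
    intro S _
    rw [q2_expand, Finset.mul_sum, ← Finset.sum_filter_add_sum_filter_not _ (fun T => #T ≤ n / 3)]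
  rw [Finset.sum_congr rfl h2, Finset.sum_add_distrib]
  congr 1
  -- Step 3: the small-T part
  · have h3 : ∀ S ∈ P2 n, (∑ T ∈ (Finset.univ \ S).powerset.filter (fun T => #T ≤ n / 3),
        c S * (eS T a * q3 ((Finset.univ \ S) \ T) z))
        = ∑ T ∈ Dset n,
            (if T ⊆ Finset.univ \ S then c S * (eS T a * q3 ((Finset.univ \ S) \ T) z) else 0) := by
      intro S _
      rw [show (Finset.univ \ S).powerset.filter (fun T => #T ≤ n / 3)
          = (Dset n).filter (fun T => T ⊆ Finset.univ \ S) by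
        ext T; simp [Dset, Finset.mem_powerset, and_comm], Finset.sum_filter]
    rw [Finset.sum_congr rfl h3, Finset.sum_comm]
    apply Finset.sum_congr rfl
    intro T _
    rw [Gfun, Finset.mul_sum]
    apply Finset.sum_congr rfl
    intro S _
    by_cases h : T ⊆ Finset.univ \ S
    · simp only [if_pos h]; ring
    · simp [h]
  -- Step 4: the large-T part
  · have h4 : ∀ S ∈ P2 n, ∀ T ∈ (Finset.univ \ S).powerset.filter (fun T => ¬ #T ≤ n / 3),
        q3 ((Finset.univ \ S) \ T) z = ∑ U ∈ Dset n, (if U ⊆ (Finset.univ \ S) \ T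
          then eS U z * (-2 : ℚ) ^ #((((Finset.univ \ S) \ T)) \ U) else 0) := by
      intro S hS T hT
      simp only [P2, Finset.mem_filter, Finset.mem_powerset] at hS hT
      have hSn : #S ≤ n := le_trans (Finset.card_le_univ S) (by simp)
      have hcu : #((Finset.univ : Finset (Fin n)) \ S) = n - #S := by
        rw [Finset.card_sdiff_of_subset (Finset.subset_univ S)]; simp
      have hR : #((Finset.univ \ S) \ T) ≤ n / 3 := by
        rw [Finset.card_sdiff_of_subset hT.1, hcu]
        have h1 := hS.2
        have h2 := hT.2
        omega
      rw [q3_expand, show ((Finset.univ \ S) \ T).powerset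
          = (Dset n).filter (fun U => U ⊆ (Finset.univ \ S) \ T) by
        ext U
        simp only [Finset.mem_filter, Finset.mem_powerset, Dset, Finset.mem_univ, true_and]
        exact ⟨fun h => ⟨le_trans (Finset.card_le_card h) hR, h⟩, And.right⟩,
        Finset.sum_filter]
    have hRS : ∑ U ∈ Dset n, βfun c a U * eS U z
        = ∑ S ∈ P2 n, ∑ T ∈ (Finset.univ \ S).powerset.filter (fun T => ¬ #T ≤ n / 3),
            ∑ U ∈ Dset n, c S * eS T a *
              (if U ⊆ (Finset.univ \ S) \ T
                then ((-2:ℚ)) ^ #(((Finset.univ \ S) \ T) \ U) else 0) * eS U z := by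
      simp only [βfun, Finset.sum_mul]
      rw [Finset.sum_comm]
      exact Finset.sum_congr rfl (fun S _ => Finset.sum_comm)
    rw [hRS]
    apply Finset.sum_congr rfl
    intro S hS
    apply Finset.sum_congr rfl
    intro T hT
    rw [h4 S hS T hT, Finset.mul_sum, Finset.mul_sum]
    apply Finset.sum_congr rfl
    intro U _
    by_cases h : U ⊆ (Finset.univ \ S) \ T
    · simp only [if_pos h]; ring
    · simp [h]

variable {n : ℕ}

private def Tt (x y z : Finset (Fin n)) : ℚ :=
  ∏ i : Fin n, (ind i x + ind i y + ind i z - 2)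

lemma Tt_expand (x y z : Finset (Fin n)) :
    Tt x y z = ∑ S ∈ (Finset.univ : Finset (Fin n)).powerset,
      eS S x * q2 (Finset.univ \ S) y z := by
  have : Tt x y z = ∏ i : Fin n, (ind i x + (ind i y + ind i z - 2)) := by
    unfold Tt; apply Finset.prod_congr rfl; intros; ring
  rw [this, Finset.prod_add]
  exact Finset.sum_congr rfl fun S _ => by rw [prod_ind]; rfl

lemma Tt_diag (x : Finset (Fin n)) : Tt x x x = (-2) ^ (n - #x) := by
  have h : Tt x x x = ∏ i : Fin n, (if i ∈ x then (1:ℚ) else -2) := by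
    unfold Tt ind; apply Finset.prod_congr rfl
    intro i _; by_cases h : i ∈ x <;> simp [h] <;> ring
  have h1 : Finset.univ.filter (fun i => i ∈ x) = x := by ext i; simp
  rw [h, Finset.prod_ite]
  simp only [Finset.prod_const_one, one_mul, Finset.prod_const]
  congr 1
  rw [Finset.filter_not, Finset.card_sdiff_of_subset (Finset.filter_subset _ _), h1]
  simp

lemma Tt_offdiag {x y z : Finset (Fin n)} (i : Fin n)
    (h : ind i x + ind i y + ind i z = 2) : Tt x y z = 0 :=
  Finset.prod_eq_zero (Finset.mem_univ i) (by rw [h]; ring)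

set_option maxHeartbeats 1000000 in
lemma eqsize {n k : ℕ} (A : Finset (Finset (Fin n)))
    (hA : ∀ a ∈ A, #a = k) (hsf : SunflowerFree A) :
    A.card ≤ 3 * #(Dset n) := by
  classical
  have offd : ∀ x ∈ A, ∀ y ∈ A, ∀ z ∈ A, ¬ (x = y ∧ x = z) → Tt x y z = 0 := by
    intro x hx y hy z hz hne
    obtain ⟨i, hi⟩ := exists_two (by rw [hA x hx, hA y hy]) (by rw [hA x hx, hA z hz])
      (hsf x hx y hy z hz) hne
    apply Tt_offdiag i
    unfold ind
    rcases hi with ⟨h1,h2,h3⟩|⟨h1,h2,h3⟩|⟨h1,h2,h3⟩ <;> simp [h1,h2,h3] <;> ring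
  let L : ((↥A) → ℚ) →ₗ[ℚ] ((↥(Dset n)) → ℚ) :=
    { toFun := fun h S => ∑ x : ↥A, h x * eS (S : Finset (Fin n)) (x : Finset (Fin n)),
      map_add' := by intro f g; funext S; simp [add_mul, Finset.sum_add_distrib],
      map_smul' := by intro r f; funext S; simp [Finset.mul_sum, mul_assoc] }
  have hkerA : #A ≤ #(Dset n) + Module.finrank ℚ (LinearMap.ker L) := by
    have h1 := LinearMap.finrank_range_add_finrank_ker L
    have h2 : Module.finrank ℚ ((↥A) → ℚ) = #A := by
      rw [Module.finrank_fintype_fun_eq_card, Fintype.card_coe]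
    have h3 : Module.finrank ℚ (LinearMap.range L) ≤ #(Dset n) := by
      refine le_trans (Submodule.finrank_le _) ?_
      rw [Module.finrank_fintype_fun_eq_card, Fintype.card_coe]
    omega
  obtain ⟨h, hhW, hsupp⟩ := exists_big_support (LinearMap.ker L)
  set σ := Finset.univ.filter (fun a : ↥A => h a ≠ 0) with hσ
  set c : Finset (Fin n) → ℚ := fun S => ∑ x : ↥A, h x * eS S ↑x with hcdef
  have hc : ∀ S ∈ Dset n, c S = 0 := by
    intro S hS
    exact congrFun (LinearMap.mem_ker.1 hhW) ⟨S, hS⟩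
  set M : ↥A → (↥A → ℚ) := fun a z => ∑ x : ↥A, h x * Tt x.1 a.1 z.1 with hM
  have hdiag : ∀ a : ↥A, M a = (h a * (-2:ℚ)^(n-k)) • (Pi.single a 1 : ↥A → ℚ) := by
    intro a; funext z
    by_cases hz : z = a
    · subst hz
      show (∑ x : ↥A, h x * Tt x.1 z.1 z.1) = _
      rw [Finset.sum_eq_single_of_mem z (Finset.mem_univ z)]
      · rw [Tt_diag, hA z.1 z.2]
        simp [Pi.single_apply]
      · intro x _ hxz
        rw [offd ↑x x.2 ↑z z.2 ↑z z.2 (fun hcc => hxz (Subtype.ext hcc.1)), mul_zero]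
    · have hall : ∀ x : ↥A, h x * Tt x.1 a.1 z.1 = 0 := by
        intro x
        rw [offd ↑x x.2 ↑a a.2 ↑z z.2, mul_zero]
        rintro ⟨h1, h2⟩
        exact hz (Subtype.ext (by rw [← h1, ← h2]))
      show (∑ x : ↥A, h x * Tt x.1 a.1 z.1) = _
      rw [Finset.sum_eq_zero (fun x _ => hall x)]
      simp [Pi.single_apply, hz]
  set Gv : Finset (Fin n) → (↥A → ℚ) := fun T => fun z => Gfun c T ↑z with hGv
  set Ev : Finset (Fin n) → (↥A → ℚ) := fun U => fun z => eS U ↑z with hEv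
  set Φ : Finset (↥A → ℚ) := (Dset n).image Gv ∪ (Dset n).image Ev with hΦ
  have hMspan : ∀ a : ↥A, M a ∈ Submodule.span ℚ (Φ : Set (↥A → ℚ)) := by
    intro a
    have hMeq : M a = (∑ T ∈ Dset n, eS T ↑a • Gv T) + ∑ U ∈ Dset n, βfun c ↑a U • Ev U := by
      funext z
      have step : (∑ x : ↥A, h x * Tt x.1 a.1 z.1)
          = ∑ S ∈ (Finset.univ : Finset (Fin n)).powerset,
              c S * q2 (Finset.univ \ S) ↑a ↑z := by
        calc (∑ x : ↥A, h x * Tt x.1 a.1 z.1)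
            = ∑ x : ↥A, ∑ S ∈ (Finset.univ : Finset (Fin n)).powerset,
                h x * (eS S ↑x * q2 (Finset.univ \ S) ↑a ↑z) := by
              refine Finset.sum_congr rfl (fun x _ => ?_)
              rw [Tt_expand, Finset.mul_sum]
          _ = ∑ S ∈ (Finset.univ : Finset (Fin n)).powerset,
                ∑ x : ↥A, h x * (eS S ↑x * q2 (Finset.univ \ S) ↑a ↑z) := Finset.sum_comm
          _ = _ := by
              refine Finset.sum_congr rfl (fun S _ => ?_)
              rw [hcdef]
              simp only
              rw [Finset.sum_mul]
              exact Finset.sum_congr rfl (fun x _ => by ring)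
      show (∑ x : ↥A, h x * Tt x.1 a.1 z.1) = _
      rw [step, slice_decomp c ↑a ↑z hc]
      simp only [Pi.add_apply, Finset.sum_apply, Pi.smul_apply, smul_eq_mul, hGv, hEv]
    rw [hMeq]
    apply Submodule.add_mem
    · refine Submodule.sum_mem _ (fun T hT => Submodule.smul_mem _ _ (Submodule.subset_span ?_))
      simp only [hΦ, Finset.coe_union, Set.mem_union, Finset.coe_image, Set.mem_image]
      exact Or.inl ⟨T, by simpa using hT, rfl⟩
    · refine Submodule.sum_mem _ (fun U hU => Submodule.smul_mem _ _ (Submodule.subset_span ?_))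
      simp only [hΦ, Finset.coe_union, Set.mem_union, Finset.coe_image, Set.mem_image]
      exact Or.inr ⟨U, by simpa using hU, rfl⟩
  have hδ : ∀ a ∈ σ, (Pi.single a 1 : ↥A → ℚ) ∈ Submodule.span ℚ (Φ : Set (↥A → ℚ)) := by
    intro a ha
    have hha : h a ≠ 0 := by simpa [hσ] using ha
    have hscal : (h a * (-2:ℚ)^(n-k)) ≠ 0 :=
      mul_ne_zero hha (pow_ne_zero _ (by norm_num))
    have hmem := hMspan a
    rw [hdiag a] at hmem
    have hmem2 := Submodule.smul_mem _ (h a * (-2:ℚ)^(n-k))⁻¹ hmem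
    rwa [smul_smul, inv_mul_cancel₀ hscal, one_smul] at hmem2
  have hcard2 : #σ ≤ 2 * #(Dset n) := by
    set W := Submodule.span ℚ (Φ : Set (↥A → ℚ)) with hW
    have hli : LinearIndependent ℚ (fun a : ↥σ => (Pi.single (a : ↥A) 1 : ↥A → ℚ)) := by
      have hb := (Pi.basisFun ℚ ↥A).linearIndependent
      have := hb.comp (Subtype.val : ↥σ → ↥A) Subtype.val_injective
      simpa [Function.comp_def, Pi.basisFun_apply] using this
    let v : ↥σ → ↥W := fun a => ⟨(Pi.single ↑a 1 : ↥A → ℚ), hδ ↑a a.2⟩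
    have hliv : LinearIndependent ℚ v := by
      apply LinearIndependent.of_comp W.subtype
      convert hli
      rfl
    have h5 := hliv.fintype_card_le_finrank
    have h6 : Module.finrank ℚ W ≤ #Φ := finrank_span_finset_le_card Φ
    have h7 : #Φ ≤ 2 * #(Dset n) := by
      refine le_trans (Finset.card_union_le _ _) ?_
      have g1 := Finset.card_image_le (s := Dset n) (f := Gv)
      have g2 := Finset.card_image_le (s := Dset n) (f := Ev)
      omega
    rw [Fintype.card_coe] at h5
    omega
  omega

lemma Dset_card (n : ℕ) : #(Dset n) = ∑ i ∈ Finset.range (n / 3 + 1), Nat.choose n i := by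
  classical
  have hD : Dset n = (Finset.range (n / 3 + 1)).biUnion
      (fun j => (Finset.univ : Finset (Fin n)).powersetCard j) := by
    ext S
    simp only [Dset, Finset.mem_filter, Finset.mem_univ, true_and, Finset.mem_biUnion,
      Finset.mem_range, Finset.mem_powersetCard]
    constructor
    · intro hle; exact ⟨#S, by omega, Finset.subset_univ S, rfl⟩
    · rintro ⟨j, hj, -, rfl⟩; omega
  rw [hD, Finset.card_biUnion]
  · refine Finset.sum_congr rfl (fun j _ => ?_)
    rw [Finset.card_powersetCard]
    congr 1
    simp
  · intro i _ j _ hij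
    simp only [Finset.disjoint_left, Finset.mem_powersetCard]
    rintro S ⟨-, rfl⟩ ⟨-, h2⟩
    exact hij h2

lemma Dset_pos (n : ℕ) : 1 ≤ #(Dset n) :=
  Finset.card_pos.2 ⟨∅, by simp [Dset]⟩

theorem stmt_2 (n : ℕ) (hn : 0 < n)
    (𝓕 : Finset (Finset (Fin n)))
    (hsf : SunflowerFree 𝓕) :
    𝓕.card ≤ 3 * n * ∑ i ∈ Finset.range (n / 3 + 1), Nat.choose n i := by
  classical
  rw [← Dset_card]
  have hfib : #𝓕 = ∑ j ∈ Finset.range (n+1), #(𝓕.filter (fun a => #a = j)) := by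
    apply Finset.card_eq_sum_card_fiberwise
    intro a _
    have h1 : #a ≤ n := le_trans (Finset.card_le_univ a) (by simp)
    exact Finset.mem_range.2 (by omega)
  have hsub : ∀ j, SunflowerFree (𝓕.filter (fun a => #a = j)) := by
    intro j F1 h1 F2 h2 F3 h3
    exact hsf F1 (Finset.mem_filter.1 h1).1 F2 (Finset.mem_filter.1 h2).1
      F3 (Finset.mem_filter.1 h3).1
  have hbound : ∀ j, #(𝓕.filter (fun a => #a = j)) ≤ 3 * #(Dset n) := fun j =>
    eqsize _ (fun a ha => (Finset.mem_filter.1 ha).2) (hsub j)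
  have h0 : #(𝓕.filter (fun a => #a = 0)) ≤ 1 := by
    refine Finset.card_le_one.2 (fun a ha b hb => ?_)
    have ha2 := (Finset.mem_filter.1 ha).2
    have hb2 := (Finset.mem_filter.1 hb).2
    rw [Finset.card_eq_zero.1 ha2, Finset.card_eq_zero.1 hb2]
  have hntop : #(𝓕.filter (fun a => #a = n)) ≤ 1 := by
    refine Finset.card_le_one.2 (fun a ha b hb => ?_)
    have ha2 := (Finset.mem_filter.1 ha).2
    have hb2 := (Finset.mem_filter.1 hb).2
    have hu : ∀ s : Finset (Fin n), #s = n → s = Finset.univ := by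
      intro s hs
      apply Finset.eq_univ_of_card
      simpa using hs
    rw [hu a ha2, hu b hb2]
  have hle : #𝓕 ≤ ∑ j ∈ Finset.range (n+1),
      (if j = 0 ∨ j = n then 1 else 3 * #(Dset n)) := by
    rw [hfib]
    refine Finset.sum_le_sum (fun j _ => ?_)
    by_cases hj : j = 0 ∨ j = n
    · rw [if_pos hj]
      rcases hj with rfl | rfl
      · exact h0
      · exact hntop
    · rw [if_neg hj]; exact hbound j
  have hsum : ∑ j ∈ Finset.range (n+1), (if j = 0 ∨ j = n then 1 else 3 * #(Dset n))
      = 2 + (n - 1) * (3 * #(Dset n)) := by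
    rw [Finset.sum_ite]
    have hf1 : (Finset.range (n+1)).filter (fun j => j = 0 ∨ j = n) = {0, n} := by
      ext j
      simp only [Finset.mem_filter, Finset.mem_range, Finset.mem_insert, Finset.mem_singleton]
      omega
    have hc1 : #((Finset.range (n+1)).filter (fun j => j = 0 ∨ j = n)) = 2 := by
      rw [hf1, Finset.card_insert_of_notMem (by simp; omega), Finset.card_singleton]
    have hc2 : #((Finset.range (n+1)).filter (fun j => ¬(j = 0 ∨ j = n))) = n - 1 := by
      have := Finset.card_filter_add_card_filter_not
        (s := Finset.range (n+1)) (p := fun j => j = 0 ∨ j = n)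
      rw [Finset.card_range] at this
      omega
    rw [Finset.sum_const, Finset.sum_const, hc1, hc2]
    simp [mul_comm]
  rw [hsum] at hle
  have hD := Dset_pos n
  calc #𝓕 ≤ 2 + (n - 1) * (3 * #(Dset n)) := hle
    _ ≤ 3 * #(Dset n) + (n - 1) * (3 * #(Dset n)) := by omega
    _ = (1 + (n - 1)) * (3 * #(Dset n)) := by ring
    _ = 3 * n * #(Dset n) := by
        have : 1 + (n - 1) = n := by omega
        rw [this]; ring
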